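/- Let B(0,c) ⊂ ℂⁿ be the open ball of radius c and ψ(z) = −log(c² − |z|²). Then the Kähler metric g on B(0,c) with Kähler form (i/2π)∂∂̄ψ (up to the normalization constant) satisfies the Ohsawa condition: ∂ψ is bounded in the L∞ norm with respect to g. -/

import Mathlib

noncomputable section

variable (n : ℕ)

/-- The potential `ψ(z) = -log(c² - |z|²)` on the ball `B(0,c) ⊆ ℂⁿ`. -/
def psi (c : ℝ) : EuclideanSpace ℂ (Fin n) → ℝ :=
  fun z => -Real.log (c ^ 2 - ‖z‖ ^ 2)

/-- The real Hessian of a function `f : ℂⁿ → ℝ`. -/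
def Hess (f : EuclideanSpace ℂ (Fin n) → ℝ) (z : EuclideanSpace ℂ (Fin n)) :
    EuclideanSpace ℂ (Fin n) →L[ℝ] EuclideanSpace ℂ (Fin n) →L[ℝ] ℝ :=
  fderiv ℝ (fun w => fderiv ℝ f w) z

/-- The `(1,1)`-form `(i/2π)∂∂̄f` expressed through the real Hessian. -/
def omegaOf (f : EuclideanSpace ℂ (Fin n) → ℝ) (z : EuclideanSpace ℂ (Fin n))
    (v w : EuclideanSpace ℂ (Fin n)) : ℝ :=
  (1 / (2 * Real.pi)) * ((1 / 2) *
    (Hess n f z w (Complex.I • v) - Hess n f z v (Complex.I • w)))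

/-- The Kähler metric associated with the Kähler form `ω`: `g(v,w) = ω(v,Jw)`. -/
def metricOf (f : EuclideanSpace ℂ (Fin n) → ℝ) (z : EuclideanSpace ℂ (Fin n))
    (v w : EuclideanSpace ℂ (Fin n)) : ℝ :=
  omegaOf n f z v (Complex.I • w)

/-- The `(1,0)`-part of the differential: `∂f(v) = ½(df(v) - i·df(iv))`. -/
def paDiff (f : EuclideanSpace ℂ (Fin n) → ℝ) (z v : EuclideanSpace ℂ (Fin n)) : ℂ :=
  (1 / 2 : ℂ) * ((fderiv ℝ f z v : ℝ) - Complex.I * ((fderiv ℝ f z (Complex.I • v) : ℝ) : ℂ))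

/-! ### Auxiliary material -/

/-- Abbreviation for the ambient space. -/
abbrev EE (n : ℕ) := EuclideanSpace ℂ (Fin n)

/-- The real inner product pairing as a continuous linear map. -/
def innerCLM : EE n →L[ℝ] EE n →L[ℝ] ℝ :=
  LinearMap.mkContinuous
    { toFun := fun z => innerSL ℝ z
      map_add' := fun x y => by ext v; simp [inner_add_left]
      map_smul' := fun r x => by ext v; simp [real_inner_smul_left] }
    1 (fun z => by simp [innerSL_apply_norm])

@[simp] lemma innerCLM_apply (z v : EE n) : innerCLM n z v = @inner ℝ _ _ z v := rfl

lemma real_inner_eq' (z v : EE n) : @inner ℝ _ _ z v = (@inner ℂ _ _ z v).re := by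
  simp [PiLp.inner_apply, Complex.inner]

lemma ht_pos {c : ℝ} {z : EE n} (hz : ‖z‖ < c) : 0 < c ^ 2 - ‖z‖ ^ 2 := by
  nlinarith [norm_nonneg z]

lemma hasFDerivAt_sub_normsq (c : ℝ) (z : EE n) :
    HasFDerivAt (fun w : EE n => c ^ 2 - ‖w‖ ^ 2) (-(2 • innerSL ℝ z)) z :=
  ((hasStrictFDerivAt_norm_sq z).hasFDerivAt).const_sub _

lemma hasFDerivAt_psi {c : ℝ} {z : EE n} (hz : ‖z‖ < c) :
    HasFDerivAt (psi n c) ((2 / (c ^ 2 - ‖z‖ ^ 2)) • innerCLM n z) z := by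
  have ht := ht_pos n hz
  have h2 := (Real.hasDerivAt_log ht.ne').comp_hasFDerivAt z (hasFDerivAt_sub_normsq n c z)
  have h3 := h2.neg
  refine h3.congr_fderiv ?_
  ext v
  simp only [ContinuousLinearMap.smul_apply, innerCLM_apply, ContinuousLinearMap.neg_apply,
    smul_eq_mul, ContinuousLinearMap.coe_smul', Pi.smul_apply, innerSL_apply_apply, nsmul_eq_mul, Nat.cast_ofNat]
  field_simp

lemma hasFDerivAt_coeff {c : ℝ} {z : EE n} (hz : ‖z‖ < c) :
    HasFDerivAt (fun w : EE n => 2 / (c ^ 2 - ‖w‖ ^ 2))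
      ((4 / (c ^ 2 - ‖z‖ ^ 2) ^ 2) • innerCLM n z) z := by
  have ht := ht_pos n hz
  have hl : HasDerivAt (fun x : ℝ => 2 / x) (2 * -((c ^ 2 - ‖z‖ ^ 2) ^ 2)⁻¹)
      (c ^ 2 - ‖z‖ ^ 2) := by
    simpa [div_eq_mul_inv] using (hasDerivAt_inv ht.ne').const_mul 2
  have h2 := hl.comp_hasFDerivAt z (hasFDerivAt_sub_normsq n c z)
  refine h2.congr_fderiv ?_
  ext v
  simp only [ContinuousLinearMap.smul_apply, innerCLM_apply, ContinuousLinearMap.neg_apply,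
    smul_eq_mul, ContinuousLinearMap.coe_smul', Pi.smul_apply, innerSL_apply_apply]
  field_simp
  ring

lemma hess_psi {c : ℝ} {z : EE n} (hz : ‖z‖ < c) :
    Hess n (psi n c) z =
      (2 / (c ^ 2 - ‖z‖ ^ 2)) • innerCLM n +
        ((4 / (c ^ 2 - ‖z‖ ^ 2) ^ 2) • innerCLM n z).smulRight (innerCLM n z) := by
  have hG : HasFDerivAt (fun w : EE n => (2 / (c ^ 2 - ‖w‖ ^ 2)) • innerCLM n w)
      ((2 / (c ^ 2 - ‖z‖ ^ 2)) • innerCLM n +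
        ((4 / (c ^ 2 - ‖z‖ ^ 2) ^ 2) • innerCLM n z).smulRight (innerCLM n z)) z :=
    (hasFDerivAt_coeff n hz).smul (innerCLM n).hasFDerivAt
  have heq : (fun w : EE n => fderiv ℝ (psi n c) w) =ᶠ[nhds z]
      fun w : EE n => (2 / (c ^ 2 - ‖w‖ ^ 2)) • innerCLM n w := by
    have hball : Metric.ball (0 : EE n) c ∈ nhds z := by
      exact Metric.isOpen_ball.mem_nhds (by simpa [mem_ball_zero_iff] using hz)
    filter_upwards [hball] with w hw
    exact (hasFDerivAt_psi n (mem_ball_zero_iff.mp hw)).fderiv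
  exact (hG.congr_of_eventuallyEq heq).fderiv

lemma hess_psi_apply {c : ℝ} {z : EE n} (hz : ‖z‖ < c) (w u : EE n) :
    Hess n (psi n c) z w u =
      (2 / (c ^ 2 - ‖z‖ ^ 2)) * @inner ℝ _ _ w u +
        (4 / (c ^ 2 - ‖z‖ ^ 2) ^ 2) * @inner ℝ _ _ z w * @inner ℝ _ _ z u := by
  rw [hess_psi n hz]
  simp [ContinuousLinearMap.smulRight_apply, mul_assoc]

/-- On the ball `B(0,c) ⊆ ℂⁿ`, the Kähler metric `g` with Kähler form `(i/2π)∂∂̄ψ`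
(where `ψ(z) = -log(c² - |z|²)`) satisfies the Ohsawa condition: `∂ψ` is bounded in the
`L∞` norm with respect to `g`, i.e. `|∂ψ|_g ≤ C` pointwise on the ball for some constant
`C`. -/
theorem psi_metric_ohsawa (c : ℝ) (hc : 0 < c) :
    ∃ C : ℝ, ∀ z ∈ Metric.ball (0 : EuclideanSpace ℂ (Fin n)) c,
      ∀ v : EuclideanSpace ℂ (Fin n),
        ‖paDiff n (psi n c) z v‖ ≤
          C * Real.sqrt (metricOf n (psi n c) z v v) := by
  refine ⟨Real.sqrt Real.pi, ?_⟩
  intro z hzball v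
  have hz : ‖z‖ < c := mem_ball_zero_iff.mp hzball
  have ht := ht_pos n hz
  set t : ℝ := c ^ 2 - ‖z‖ ^ 2 with htdef
  set a : ℂ := @inner ℂ _ _ z v with hadef
  set A : ℝ := ‖a‖ with hAdef
  have hA0 : 0 ≤ A := norm_nonneg a
  -- inner product facts
  have r1 : @inner ℝ _ _ z v = a.re := real_inner_eq' n z v
  have r2 : @inner ℝ _ _ z (Complex.I • v) = -a.im := by
    rw [real_inner_eq' n, inner_smul_right]; simp [hadef]
  have r3 : @inner ℝ _ _ v v = ‖v‖ ^ 2 := real_inner_self_eq_norm_sq v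
  have r4 : @inner ℝ _ _ (Complex.I • v) (Complex.I • v) = ‖v‖ ^ 2 := by
    rw [real_inner_self_eq_norm_sq, norm_smul]; simp
  -- first derivative values
  have hd := (hasFDerivAt_psi n hz).fderiv
  have d1 : fderiv ℝ (psi n c) z v = (2 / t) * a.re := by
    rw [hd]; simp [r1, htdef]
  have d2 : fderiv ℝ (psi n c) z (Complex.I • v) = (2 / t) * (-a.im) := by
    rw [hd]; simp [r2, htdef]
  -- the (1,0)-differential
  have hpa : ‖paDiff n (psi n c) z v‖ = A / t := by
    have hval : paDiff n (psi n c) z v = a / (t : ℂ) := by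
      rw [paDiff, d1, d2]
      have htne : (t : ℂ) ≠ 0 := by exact_mod_cast ht.ne'
      field_simp
      rw [Complex.ext_iff]
      push_cast
      constructor <;> simp <;> field_simp [ht.ne']
    rw [hval, norm_div, Complex.norm_of_nonneg ht.le]
  -- the metric value
  have hII : Complex.I • Complex.I • v = -v := by
    rw [smul_smul, Complex.I_mul_I, neg_one_smul]
  have hsq : a.re ^ 2 + a.im ^ 2 = A ^ 2 := by
    rw [hAdef, Complex.sq_norm, Complex.normSq_apply]; ring
  have hmet' : metricOf n (psi n c) z v v =
      (1 / Real.pi) * (‖v‖ ^ 2 / t + (a.re ^ 2 + a.im ^ 2) / t ^ 2) := by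
    rw [metricOf, omegaOf, hII, map_neg,
      hess_psi_apply n hz (Complex.I • v) (Complex.I • v), hess_psi_apply n hz v v,
      r2, r3, r4, r1]
    have hπ := Real.pi_pos
    rw [← htdef]
    field_simp
    ring
  have hmet : metricOf n (psi n c) z v v =
      (1 / Real.pi) * (‖v‖ ^ 2 / t + A ^ 2 / t ^ 2) := by
    rw [hmet', hsq]
  -- conclude
  have hπ := Real.pi_pos
  have hmet0 : 0 ≤ metricOf n (psi n c) z v v := by
    rw [hmet]; positivity
  have key : (A / t) ^ 2 ≤ Real.pi * metricOf n (psi n c) z v v := by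
    rw [hmet]
    have : Real.pi * ((1 / Real.pi) * (‖v‖ ^ 2 / t + A ^ 2 / t ^ 2)) =
        ‖v‖ ^ 2 / t + A ^ 2 / t ^ 2 := by field_simp
    rw [this, div_pow]
    have : 0 ≤ ‖v‖ ^ 2 / t := by positivity
    linarith
  rw [hpa]
  calc A / t = Real.sqrt ((A / t) ^ 2) := by
        rw [Real.sqrt_sq (by positivity)]
    _ ≤ Real.sqrt (Real.pi * metricOf n (psi n c) z v v) := Real.sqrt_le_sqrt key
    _ = Real.sqrt Real.pi * Real.sqrt (metricOf n (psi n c) z v v) :=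
        Real.sqrt_mul hπ.le _
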